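/- Let r ≥ 0 be an integer, t_min > 0, β > 0 with β·(r+1) > 1, and 0 ≤ φ < 1. Let X_1, ..., X_{r+1} be independent Pareto(t_min, β) random variables. Then E[ max( t_min, (1 − φ)·min(X_1, ..., X_{r+1}) ) ] = t_min + t_min·(1 − φ)^{β·(r+1)}/(β·(r+1) − 1). -/

import Mathlib

open MeasureTheory ProbabilityTheory Set

/-- A real random variable `X` is Pareto(`tmin`, `β`): `P(X > t) = (tmin/t)^β` for `t ≥ tmin`
and `P(X > t) = 1` for `t < tmin`. -/
def IsPareto {Ω : Type*} [MeasurableSpace Ω] (μ : Measure Ω) (X : Ω → ℝ)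
    (tmin β : ℝ) : Prop :=
  Measurable X ∧
    (∀ t : ℝ, tmin ≤ t → μ {ω | t < X ω} = ENNReal.ofReal ((tmin / t) ^ β)) ∧
    (∀ t : ℝ, t < tmin → μ {ω | t < X ω} = 1)

/-- Eq. (resume8) in the paper's Theorem 6: for `r+1` independent
Pareto(`tmin`, `β`) attempts, each scaled by the remaining fraction `1 − φ` and floored
at `tmin`, the expected time of the fastest attempt is
`tmin + tmin·(1−φ)^{β(r+1)}/(β(r+1) − 1)`. -/
theorem expected_min_resume
    {Ω : Type*} [MeasurableSpace Ω] (μ : Measure Ω) [IsProbabilityMeasure μ]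
    (r : ℕ) (tmin β φ : ℝ)
    (htmin : 0 < tmin) (hβ : 0 < β) (hβr : 1 < β * (r + 1 : ℝ))
    (hφ0 : 0 ≤ φ) (hφ1 : φ < 1)
    (X : Fin (r + 1) → Ω → ℝ)
    (hindep : iIndepFun X μ)
    (hX : ∀ k, IsPareto μ (X k) tmin β) :
    ∫ ω, max tmin ((1 - φ) * ⨅ k, X k ω) ∂μ
      = tmin + tmin * (1 - φ) ^ (β * (r + 1 : ℝ)) / (β * (r + 1 : ℝ) - 1) := by
  set B : ℝ := β * (r + 1 : ℝ) with hBdef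
  have hB1 : 1 < B := hβr
  have hB0 : 0 < B := lt_trans one_pos hB1
  have h1φ : 0 < 1 - φ := by linarith
  have hXm : ∀ k, Measurable (X k) := fun k => (hX k).1
  set Y : Ω → ℝ := fun ω => ⨅ k, X k ω with hYdef
  have hYm : Measurable Y := Measurable.iInf hXm
  set Z : Ω → ℝ := fun ω => max tmin ((1 - φ) * Y ω) with hZdef
  have hZm : Measurable Z := measurable_const.max (measurable_const.mul hYm)
  have htZ : ∀ ω, tmin ≤ Z ω := fun ω => le_max_left _ _
  have hZnn : ∀ ω, 0 ≤ Z ω := fun ω => le_trans htmin.le (htZ ω)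
  have hZae : 0 ≤ᵐ[μ] Z := Filter.Eventually.of_forall hZnn
  -- The min of the X's as an intersection
  have hYset : ∀ t : ℝ, {ω | t < Y ω} = ⋂ k, {ω | t < X k ω} := by
    intro t
    ext ω
    simp only [mem_iInter, mem_setOf_eq, hYdef]
    constructor
    · intro h k
      exact lt_of_lt_of_le h (ciInf_le (Set.Finite.bddBelow (finite_range _)) k)
    · intro h
      obtain ⟨k0, hk0⟩ := exists_eq_ciInf_of_finite (f := fun k => X k ω)
      rw [← hk0]; exact h k0
  -- distribution of Y above tmin
  have hYd : ∀ t : ℝ, tmin ≤ t → μ {ω | t < Y ω} = ENNReal.ofReal ((tmin / t) ^ B) := by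
    intro t ht
    rw [hYset, hindep.meas_iInter (s := fun k => {ω | t < X k ω})
      (fun k => ⟨Ioi t, measurableSet_Ioi, rfl⟩)]
    have ht0 : 0 ≤ tmin / t := div_nonneg htmin.le (htmin.le.trans ht)
    have hprod : ∀ k : Fin (r+1), μ {ω | t < X k ω} = ENNReal.ofReal ((tmin / t) ^ β) :=
      fun k => (hX k).2.1 t ht
    simp only [hprod, Finset.prod_const, Finset.card_univ, Fintype.card_fin]
    rw [← ENNReal.ofReal_pow (Real.rpow_nonneg ht0 β),
      ← Real.rpow_natCast ((tmin / t) ^ β) (r + 1), ← Real.rpow_mul ht0]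
    congr 2
    push_cast
    rw [hBdef]
  -- distribution of Z
  have hZd1 : ∀ t : ℝ, t < tmin → μ {ω | t < Z ω} = 1 := by
    intro t ht
    have : {ω | t < Z ω} = univ := eq_univ_of_forall (fun ω => lt_of_lt_of_le ht (htZ ω))
    rw [this, measure_univ]
  have hZd2 : ∀ t : ℝ, tmin ≤ t →
      μ {ω | t < Z ω} = ENNReal.ofReal ((tmin * (1 - φ) / t) ^ B) := by
    intro t ht
    have ht0 : 0 < t := lt_of_lt_of_le htmin ht
    have hdiv : tmin ≤ t / (1 - φ) := by
      rw [le_div_iff₀ h1φ]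
      nlinarith
    have hset2 : {ω | t < Z ω} = {ω | t / (1 - φ) < Y ω} := by
      ext ω
      simp only [mem_setOf_eq, hZdef]
      have hnt : ¬ t < tmin := not_lt.mpr ht
      rw [lt_max_iff, div_lt_iff₀ h1φ, mul_comm (Y ω) (1 - φ)]
      tauto
    rw [hset2, hYd _ hdiv]
    congr 1
    rw [div_div_eq_mul_div]
  -- the formula on (tmin, ∞)
  set C : ℝ := (tmin * (1 - φ)) ^ B with hCdef
  have hC0 : 0 ≤ C := Real.rpow_nonneg (by positivity) B
  have hform : ∀ t ∈ Ioi tmin, μ {ω | t < Z ω} = ENNReal.ofReal (C * t ^ (-B)) := by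
    intro t ht
    have ht0 : 0 < t := htmin.trans ht
    rw [hZd2 t ht.le]
    congr 1
    rw [Real.div_rpow (by positivity) ht0.le, Real.rpow_neg ht0.le, div_eq_mul_inv, hCdef]
  have hfint : IntegrableOn (fun t : ℝ => C * t ^ (-B)) (Ioi tmin) :=
    (integrableOn_Ioi_rpow_of_lt (by linarith) htmin).const_mul C
  -- integrability of Z via the lintegral layercake
  have hlint : ∫⁻ ω, ENNReal.ofReal (Z ω) ∂μ < ⊤ := by
    rw [lintegral_eq_lintegral_meas_lt μ hZae hZm.aemeasurable]
    have hsplit : Ioi (0 : ℝ) = Ioc 0 tmin ∪ Ioi tmin := (Ioc_union_Ioi_eq_Ioi htmin.le).symm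
    rw [hsplit, lintegral_union measurableSet_Ioi (Ioc_disjoint_Ioi le_rfl)]
    have h1 : ∫⁻ t in Ioc (0 : ℝ) tmin, μ {a | t < Z a} ≤ ENNReal.ofReal tmin := by
      calc ∫⁻ t in Ioc (0 : ℝ) tmin, μ {a | t < Z a}
          ≤ ∫⁻ _ in Ioc (0 : ℝ) tmin, 1 := lintegral_mono (fun t => prob_le_one)
        _ = volume (Ioc (0 : ℝ) tmin) := by rw [setLIntegral_one]
        _ = ENNReal.ofReal tmin := by rw [Real.volume_Ioc, sub_zero]
    have h2 : ∫⁻ t in Ioi tmin, μ {a | t < Z a} < ⊤ := by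
      have heq : ∫⁻ t in Ioi tmin, μ {a | t < Z a}
          = ∫⁻ t in Ioi tmin, ENNReal.ofReal (C * t ^ (-B)) :=
        setLIntegral_congr_fun measurableSet_Ioi hform
      rw [heq]
      exact hfint.lintegral_lt_top
    calc (∫⁻ t in Ioc (0:ℝ) tmin, μ {a | t < Z a}) + ∫⁻ t in Ioi tmin, μ {a | t < Z a}
        ≤ ENNReal.ofReal tmin + ∫⁻ t in Ioi tmin, μ {a | t < Z a} := add_le_add h1 le_rfl
      _ < ⊤ := ENNReal.add_lt_top.mpr ⟨ENNReal.ofReal_lt_top, h2⟩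
  have hZint : Integrable Z μ :=
    ⟨hZm.aestronglyMeasurable, (hasFiniteIntegral_iff_ofReal hZae).mpr hlint⟩
  -- layercake for the Bochner integral
  rw [hZint.integral_eq_integral_meas_lt hZae]
  -- integrability of the tail probability function
  have hganti : Antitone (fun t : ℝ => (μ {a | t < Z a}).toReal) := by
    intro s t hst
    exact ENNReal.toReal_mono (measure_ne_top μ _)
      (measure_mono (fun ω hω => lt_of_le_of_lt hst hω))
  have hg1 : IntegrableOn (fun t : ℝ => (μ {a | t < Z a}).toReal) (Ioc 0 tmin) := by
    refine Integrable.mono' (integrable_const (1 : ℝ))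
      hganti.measurable.aestronglyMeasurable.restrict
      (Filter.Eventually.of_forall fun t => ?_)
    rw [Real.norm_of_nonneg ENNReal.toReal_nonneg]
    exact ENNReal.toReal_mono ENNReal.one_ne_top prob_le_one
  have hgEq : EqOn (fun t : ℝ => C * t ^ (-B)) (fun t : ℝ => (μ {a | t < Z a}).toReal)
      (Ioi tmin) := by
    intro t ht
    have ht0 : 0 < t := htmin.trans ht
    simp only
    rw [hform t ht, ENNReal.toReal_ofReal (by positivity)]
  have hg2 : IntegrableOn (fun t : ℝ => (μ {a | t < Z a}).toReal) (Ioi tmin) :=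
    hfint.congr_fun hgEq measurableSet_Ioi
  have hsplit : Ioi (0 : ℝ) = Ioc 0 tmin ∪ Ioi tmin := (Ioc_union_Ioi_eq_Ioi htmin.le).symm
  simp_rw [measureReal_def]
  rw [hsplit, setIntegral_union (Ioc_disjoint_Ioi le_rfl) measurableSet_Ioi hg1 hg2]
  have hI1 : ∫ t in Ioc (0 : ℝ) tmin, (μ {a | t < Z a}).toReal = tmin := by
    rw [integral_Ioc_eq_integral_Ioo,
      setIntegral_congr_fun (g := fun _ => (1 : ℝ)) measurableSet_Ioo
        (fun t ht => by rw [hZd1 t ht.2]; simp)]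
    rw [setIntegral_const, measureReal_def, Real.volume_Ioo, sub_zero, ENNReal.toReal_ofReal htmin.le,
      smul_eq_mul, mul_one]
  have hI2 : ∫ t in Ioi tmin, (μ {a | t < Z a}).toReal = tmin * (1 - φ) ^ B / (B - 1) := by
    rw [setIntegral_congr_fun (f := fun t : ℝ => (μ {a | t < Z a}).toReal)
      (g := fun t : ℝ => C * t ^ (-B)) measurableSet_Ioi (fun t ht => (hgEq ht).symm)]
    rw [integral_const_mul, integral_Ioi_rpow_of_lt (by linarith) htmin]
    have h1 : tmin ^ B * tmin ^ (-B + 1) = tmin := by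
      rw [← Real.rpow_add htmin]
      norm_num
    have h3 : -tmin ^ (-B + 1) / (-B + 1) = tmin ^ (-B + 1) / (B - 1) := by
      rw [show (-B + 1 : ℝ) = -(B - 1) by ring, div_neg, neg_div, neg_neg]
    rw [h3, hCdef, Real.mul_rpow htmin.le h1φ.le]
    have h4 : tmin ^ B * (1 - φ) ^ B * (tmin ^ (-B + 1) / (B - 1))
        = tmin ^ B * tmin ^ (-B + 1) * (1 - φ) ^ B / (B - 1) := by ring
    rw [h4, h1]
  rw [hI1, hI2]
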